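/- In every Richman game, the limit Richman function R is a threshold budget function: for every vertex v, if Player 1's initial budget exceeds R(v) then Player 1 has a winning strategy from v (forcing the outcome to reach v_R), and if Player 2's initial budget exceeds 1 − R(v) then Player 2 has a winning strategy from v. -/
import Mathlib


open scoped Classical

/-! ### Bidding games: the basic model -/

/-- One round of a bidding game: the vertex the token was moved to, the winning bid,
and whether Player 1 won the bidding. -/
structure BidRound (V : Type) where
  dest : V
  bid : ℝ
  p1Won : Bool

/-- A history: the initial vertex together with the list of rounds played so far. -/
structure Hist (V : Type) where
  init : V
  rounds : List (BidRound V)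

/-- The vertex currently occupied by the token. -/
def Hist.cur {V : Type} (h : Hist V) : V :=
  h.rounds.getLast?.elim h.init BidRound.dest

/-- The net payment of Player 1 so far (bids paid upon winning minus bids received). -/
def Hist.pay1 {V : Type} (h : Hist V) : ℝ :=
  (h.rounds.map (fun r => if r.p1Won then r.bid else -r.bid)).sum

/-- The net payment of Player 2 so far. -/
def Hist.pay2 {V : Type} (h : Hist V) : ℝ := -h.pay1

/-- The sum of the weights of all vertices visited so far (including the current one). -/
def Hist.energyAll {V : Type} (w : V → ℤ) (h : Hist V) : ℤ :=
  w h.init + (h.rounds.map (fun r => w r.dest)).sum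

/-- A strategy: maps a history to a bid and the vertex to move to upon winning. -/
def Strat (V : Type) := Hist V → ℝ × V

/-- A tie-breaking mechanism: decides at each history whether Player 1 wins a tie. -/
def TieBreak (V : Type) := Hist V → Bool

/-- A bidding game: a finite directed graph in which every vertex has an outgoing edge. -/
structure BiddingGame (V : Type) [Fintype V] where
  E : V → V → Prop
  total : ∀ v, ∃ u, E v u

/-- One round of play: both players bid; the higher bidder (Player 1 upon a tie won by
the tie-breaking mechanism) pays his bid to the other player and moves the token. -/
noncomputable def extend {V : Type} (tb : TieBreak V) (f1 f2 : Strat V) (h : Hist V) : Hist V :=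
  if (f2 h).1 < (f1 h).1 ∨ ((f1 h).1 = (f2 h).1 ∧ tb h = true) then
    ⟨h.init, h.rounds ++ [⟨(f1 h).2, (f1 h).1, true⟩]⟩
  else
    ⟨h.init, h.rounds ++ [⟨(f2 h).2, (f2 h).1, false⟩]⟩

/-- The history after `n` rounds, starting at `v0`. -/
noncomputable def play {V : Type} (tb : TieBreak V) (f1 f2 : Strat V) (v0 : V) : ℕ → Hist V
  | 0 => ⟨v0, []⟩
  | n + 1 => extend tb f1 f2 (play tb f1 f2 v0 n)

/-- The vertex occupied after `n` rounds. -/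
noncomputable def visit {V : Type} (tb : TieBreak V) (f1 f2 : Strat V) (v0 : V) (n : ℕ) : V :=
  (play tb f1 f2 v0 n).cur

/-- The energy (sum of weights) of the prefix of length `n` of the outcome. -/
noncomputable def energy {V : Type} (w : V → ℤ) (tb : TieBreak V) (f1 f2 : Strat V) (v0 : V)
    (n : ℕ) : ℤ :=
  ∑ i ∈ Finset.range n, w (visit tb f1 f2 v0 i)

/-- Player 1's strategy is legal w.r.t. the initial budget `B`: along any play, his bids
are nonnegative, never exceed his current budget, and his moves follow edges. -/
def Legal1 {V : Type} [Fintype V] (G : BiddingGame V) (f1 : Strat V) (B : ℝ) : Prop :=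
  ∀ (tb : TieBreak V) (f2 : Strat V) (v0 : V) (n : ℕ),
    0 ≤ (f1 (play tb f1 f2 v0 n)).1 ∧
    (f1 (play tb f1 f2 v0 n)).1 ≤ B - (play tb f1 f2 v0 n).pay1 ∧
    G.E (play tb f1 f2 v0 n).cur (f1 (play tb f1 f2 v0 n)).2

/-- Player 2's strategy is legal w.r.t. the initial budget `B`. -/
def Legal2 {V : Type} [Fintype V] (G : BiddingGame V) (f2 : Strat V) (B : ℝ) : Prop :=
  ∀ (tb : TieBreak V) (f1 : Strat V) (v0 : V) (n : ℕ),
    0 ≤ (f2 (play tb f1 f2 v0 n)).1 ∧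
    (f2 (play tb f1 f2 v0 n)).1 ≤ B - (play tb f1 f2 v0 n).pay2 ∧
    G.E (play tb f1 f2 v0 n).cur (f2 (play tb f1 f2 v0 n)).2

/-- A memoryless strategy: its action depends only on the current vertex and the
player's current budget (equivalently, the net payments so far). -/
def Memoryless {V : Type} (f : Strat V) : Prop :=
  ∀ h h' : Hist V, h.cur = h'.cur → h.pay1 = h'.pay1 → f h = f h'

/-- A memoryless strategy in a mean-payoff game: its action depends only on the current
vertex, the player's current budget, and the current energy level. -/
def MemorylessE {V : Type} (w : V → ℤ) (f : Strat V) : Prop :=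
  ∀ h h' : Hist V, h.cur = h'.cur → h.pay1 = h'.pay1 →
    h.energyAll w = h'.energyAll w → f h = f h'

/-- A constant-memory strategy for Player 2 (Max): the action depends only on the current
vertex, Player 2's current budget, the current energy level, and a memory state ranging
over a finite set (of size independent of the history), updated round by round. -/
def FiniteMemory2 {V : Type} (w : V → ℤ) (f : Strat V) (B : ℝ) : Prop :=
  ∃ (M : Type) (_ : Fintype M) (m0 : M) (upd : M → BidRound V → M)
    (act : V → ℝ → ℤ → M → ℝ × V),
    ∀ h : Hist V, f h = act h.cur (B - h.pay2) (h.energyAll w) (h.rounds.foldl upd m0)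

/-- Strong connectivity of the arena. -/
def StronglyConnected {V : Type} [Fintype V] (G : BiddingGame V) : Prop :=
  ∀ v u : V, Relation.ReflTransGen G.E v u

/-! ### Richman games -/

/-- The successors of `v`. -/
noncomputable def BiddingGame.adj {V : Type} [Fintype V] (G : BiddingGame V) (v : V) :
    Finset V :=
  Finset.univ.filter (fun u => G.E v u)

lemma BiddingGame.adj_nonempty {V : Type} [Fintype V] (G : BiddingGame V) (v : V) :
    (G.adj v).Nonempty := by
  obtain ⟨u, hu⟩ := G.total v
  exact ⟨u, by simpa [BiddingGame.adj] using hu⟩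

/-- The Richman function `R(v, i)`. -/
noncomputable def Rfun {V : Type} [Fintype V] (G : BiddingGame V) (vR vS : V) :
    ℕ → V → ℝ
  | 0, v => if v = vR then 0 else 1
  | i + 1, v =>
      if v = vR then 0
      else if v = vS then 1
      else ((G.adj v).sup' (G.adj_nonempty v) (Rfun G vR vS i) +
            (G.adj v).inf' (G.adj_nonempty v) (Rfun G vR vS i)) / 2

/-- The limit Richman function `R(v) = lim_i R(v, i)`; since `i ↦ R(v, i)` is
nonincreasing, the limit equals the infimum. -/
noncomputable def Rlim {V : Type} [Fintype V] (G : BiddingGame V) (vR vS : V)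
    (v : V) : ℝ :=
  ⨅ i : ℕ, Rfun G vR vS i v

/-- Player 1 wins an outcome of a Richman game: `vR` is reached, and `vS` is not
reached before that (the game ends once a target is reached). -/
def Win1Richman {V : Type} (tb : TieBreak V) (f1 f2 : Strat V) (v0 vR vS : V) : Prop :=
  ∃ n, visit tb f1 f2 v0 n = vR ∧ ∀ m < n, visit tb f1 f2 v0 m ≠ vS

/-- Player 2 wins an outcome of a Richman game: `vS` is reached first, or no target is
ever reached. -/
def Win2Richman {V : Type} (tb : TieBreak V) (f1 f2 : Strat V) (v0 vR vS : V) : Prop :=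
  (∃ n, visit tb f1 f2 v0 n = vS ∧ ∀ m < n, visit tb f1 f2 v0 m ≠ vR) ∨
  (∀ n, visit tb f1 f2 v0 n ≠ vR ∧ visit tb f1 f2 v0 n ≠ vS)

/-- Player 1 has a winning strategy in the Richman game from `v0` with budget `B`. -/
def Win1RichmanFrom {V : Type} [Fintype V] (G : BiddingGame V) (vR vS v0 : V)
    (B : ℝ) : Prop :=
  ∀ tb : TieBreak V, ∃ f1 : Strat V, Legal1 G f1 B ∧
    ∀ f2 : Strat V, Legal2 G f2 (1 - B) → Win1Richman tb f1 f2 v0 vR vS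

/-- Player 2 has a winning strategy in the Richman game from `v0` with budget `B`. -/
def Win2RichmanFrom {V : Type} [Fintype V] (G : BiddingGame V) (vR vS v0 : V)
    (B : ℝ) : Prop :=
  ∀ tb : TieBreak V, ∃ f2 : Strat V, Legal2 G f2 B ∧
    ∀ f1 : Strat V, Legal1 G f1 (1 - B) → Win2Richman tb f1 f2 v0 vR vS

/-- `t` is a threshold budget at `v` in the Richman game. -/
def IsThreshRichman {V : Type} [Fintype V] (G : BiddingGame V) (vR vS v : V)
    (t : ℝ) : Prop :=
  (∀ B : ℝ, B ≤ 1 → t < B → Win1RichmanFrom G vR vS v B) ∧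
  (∀ B : ℝ, B ≤ 1 → 1 - t < B → Win2RichmanFrom G vR vS v B)

/-! ### Richman games with target sets -/

def Win1RichmanSet {V : Type} (tb : TieBreak V) (f1 f2 : Strat V) (v0 : V)
    (R S : Set V) : Prop :=
  ∃ n, visit tb f1 f2 v0 n ∈ R ∧ ∀ m < n, visit tb f1 f2 v0 m ∉ S

def Win2RichmanSet {V : Type} (tb : TieBreak V) (f1 f2 : Strat V) (v0 : V)
    (R S : Set V) : Prop :=
  (∃ n, visit tb f1 f2 v0 n ∈ S ∧ ∀ m < n, visit tb f1 f2 v0 m ∉ R) ∨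
  (∀ n, visit tb f1 f2 v0 n ∉ R ∧ visit tb f1 f2 v0 n ∉ S)

/-- `t` is a threshold budget at `v` in the Richman game with target sets `R` and `S`. -/
def IsThreshRichmanSet {V : Type} [Fintype V] (G : BiddingGame V) (R S : Set V)
    (v : V) (t : ℝ) : Prop :=
  (∀ B : ℝ, B ≤ 1 → t < B → ∀ tb : TieBreak V, ∃ f1 : Strat V, Legal1 G f1 B ∧
      ∀ f2 : Strat V, Legal2 G f2 (1 - B) → Win1RichmanSet tb f1 f2 v R S) ∧
  (∀ B : ℝ, B ≤ 1 → 1 - t < B → ∀ tb : TieBreak V, ∃ f2 : Strat V, Legal2 G f2 B ∧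
      ∀ f1 : Strat V, Legal1 G f1 (1 - B) → Win2RichmanSet tb f1 f2 v R S)

/-! ### Reachability games -/

/-- `t` is a threshold budget at `v` in the reachability game with target set `T`. -/
def IsThreshReach {V : Type} [Fintype V] (G : BiddingGame V) (T : Set V) (v : V)
    (t : ℝ) : Prop :=
  (∀ B : ℝ, B ≤ 1 → t < B → ∀ tb : TieBreak V, ∃ f1 : Strat V, Legal1 G f1 B ∧
      ∀ f2 : Strat V, Legal2 G f2 (1 - B) → ∃ n, visit tb f1 f2 v n ∈ T) ∧
  (∀ B : ℝ, B ≤ 1 → 1 - t < B → ∀ tb : TieBreak V, ∃ f2 : Strat V, Legal2 G f2 B ∧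
      ∀ f1 : Strat V, Legal1 G f1 (1 - B) → ∀ n, visit tb f1 f2 v n ∉ T)

/-! ### Parity games -/

/-- Player 1 wins an outcome of a parity game: the maximal parity index visited
infinitely often is odd. -/
def Win1Parity {V : Type} (p : V → ℕ) (tb : TieBreak V) (f1 f2 : Strat V)
    (v0 : V) : Prop :=
  Odd (sSup {k : ℕ | ∀ N : ℕ, ∃ n ≥ N, p (visit tb f1 f2 v0 n) = k})

def Win1ParityFrom {V : Type} [Fintype V] (G : BiddingGame V) (p : V → ℕ) (v0 : V)
    (B : ℝ) : Prop :=
  ∀ tb : TieBreak V, ∃ f1 : Strat V, Legal1 G f1 B ∧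
    ∀ f2 : Strat V, Legal2 G f2 (1 - B) → Win1Parity p tb f1 f2 v0

def Win2ParityFrom {V : Type} [Fintype V] (G : BiddingGame V) (p : V → ℕ) (v0 : V)
    (B : ℝ) : Prop :=
  ∀ tb : TieBreak V, ∃ f2 : Strat V, Legal2 G f2 B ∧
    ∀ f1 : Strat V, Legal1 G f1 (1 - B) → ¬ Win1Parity p tb f1 f2 v0

/-- `t` is a threshold budget at `v` in the parity game. -/
def IsThreshParity {V : Type} [Fintype V] (G : BiddingGame V) (p : V → ℕ) (v : V)
    (t : ℝ) : Prop :=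
  (∀ B : ℝ, B ≤ 1 → t < B → Win1ParityFrom G p v B) ∧
  (∀ B : ℝ, B ≤ 1 → 1 - t < B → Win2ParityFrom G p v B)

/-! ### Mean-payoff games (Min is Player 1, Max is Player 2) -/

/-- The mean-payoff value of the outcome. -/
noncomputable def mpval {V : Type} (w : V → ℤ) (tb : TieBreak V) (f1 f2 : Strat V)
    (v0 : V) : ℝ :=
  Filter.liminf (fun n : ℕ => (energy w tb f1 f2 v0 n : ℝ) / n) Filter.atTop

/-- Min can guarantee a nonpositive mean-payoff value from `v0` with budget `B`. -/
def MinWinsFrom {V : Type} [Fintype V] (G : BiddingGame V) (w : V → ℤ) (v0 : V)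
    (B : ℝ) : Prop :=
  ∀ tb : TieBreak V, ∃ f1 : Strat V, Legal1 G f1 B ∧
    ∀ f2 : Strat V, Legal2 G f2 (1 - B) → mpval w tb f1 f2 v0 ≤ 0

/-- Max can guarantee a strictly positive mean-payoff value from `v0` with budget `B`. -/
def MaxWinsFrom {V : Type} [Fintype V] (G : BiddingGame V) (w : V → ℤ) (v0 : V)
    (B : ℝ) : Prop :=
  ∀ tb : TieBreak V, ∃ f2 : Strat V, Legal2 G f2 B ∧
    ∀ f1 : Strat V, Legal1 G f1 (1 - B) → 0 < mpval w tb f1 f2 v0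

/-- `t` is a threshold budget at `v` in the mean-payoff game. -/
def IsThreshMP {V : Type} [Fintype V] (G : BiddingGame V) (w : V → ℤ) (v : V)
    (t : ℝ) : Prop :=
  (∀ B : ℝ, B ≤ 1 → t < B → MinWinsFrom G w v B) ∧
  (∀ B : ℝ, B ≤ 1 → 1 - t < B → MaxWinsFrom G w v B)

/-! ### The split graph `G^u` and the weighted Richman function -/

/-- Edges of `G^u`: `u` is split into `u_s = Sum.inl u` (keeping the outgoing edges of
`u`, with no incoming edges) and `u_t = Sum.inr ()` (receiving the edges into `u`, with
no outgoing edges). -/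
def splitE {V : Type} [Fintype V] (G : BiddingGame V) (u : V) :
    V ⊕ Unit → V ⊕ Unit → Prop
  | Sum.inl v, Sum.inl x => G.E v x ∧ x ≠ u
  | Sum.inl v, Sum.inr _ => G.E v u
  | Sum.inr _, _ => False

/-- The successors in `G^u` of a vertex `v ∈ V` (i.e. of `Sum.inl v`). -/
noncomputable def succu {V : Type} [Fintype V] (G : BiddingGame V) (u v : V) :
    Finset (V ⊕ Unit) :=
  Finset.univ.filter (fun y => splitE G u (Sum.inl v) y)

lemma succu_nonempty {V : Type} [Fintype V] (G : BiddingGame V) (u v : V) :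
    (succu G u v).Nonempty := by
  obtain ⟨x, hx⟩ := G.total v
  by_cases hxu : x = u
  · refine ⟨Sum.inr (), ?_⟩
    simp only [succu, Finset.mem_filter, Finset.mem_univ, true_and]
    exact show G.E v u from hxu ▸ hx
  · refine ⟨Sum.inl x, ?_⟩
    simp only [succu, Finset.mem_filter, Finset.mem_univ, true_and]
    exact show G.E v x ∧ x ≠ u from ⟨hx, hxu⟩

/-- `W(v⁺)`: the maximal value of `W` over the `G^u`-successors of `v`. -/
noncomputable def supWu {V : Type} [Fintype V] (G : BiddingGame V) (u : V)
    (W : V ⊕ Unit → ℝ) (v : V) : ℝ :=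
  (succu G u v).sup' (succu_nonempty G u v) W

/-- `W(v⁻)`: the minimal value of `W` over the `G^u`-successors of `v`. -/
noncomputable def infWu {V : Type} [Fintype V] (G : BiddingGame V) (u : V)
    (W : V ⊕ Unit → ℝ) (v : V) : ℝ :=
  (succu G u v).inf' (succu_nonempty G u v) W

/-- `W` is a weighted Richman function for the weights `w`, split at `u`:
`W(u_t) = 0` and `W(v) = (W(v⁺) + W(v⁻))/2 + w(v)` for every `v ∈ V`
(`Sum.inl v` represents `v`, in particular `Sum.inl u` is `u_s`). -/
def IsWRichman {V : Type} [Fintype V] (G : BiddingGame V) (w : V → ℝ) (u : V)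
    (W : V ⊕ Unit → ℝ) : Prop :=
  W (Sum.inr ()) = 0 ∧
  ∀ v : V, W (Sum.inl v) = (supWu G u W v + infWu G u W v) / 2 + w v

/-- Projection of `G^u`-vertices back to vertices of `G`. -/
def projU {V : Type} (u : V) : V ⊕ Unit → V := Sum.elim id (fun _ => u)

/-- `w_M`: the maximal absolute value of `W` over `V`. -/
noncomputable def wMax {V : Type} [Fintype V] (W : V ⊕ Unit → ℝ) (u : V) : ℝ :=
  Finset.univ.sup' ⟨u, Finset.mem_univ u⟩ (fun v : V => |W (Sum.inl v)|)

/-- `b_M`: the maximal value of the bid `(W(v⁺) − W(v⁻))/2` over `V`. -/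
noncomputable def bMax {V : Type} [Fintype V] (G : BiddingGame V) (u : V)
    (W : V ⊕ Unit → ℝ) : ℝ :=
  Finset.univ.sup' ⟨u, Finset.mem_univ u⟩
    (fun v : V => (supWu G u W v - infWu G u W v) / 2)

/-! ### Auxiliary material for the proof of Statement 1 -/

open Filter Topology

section PlayLemmas

variable {V : Type}

lemma extend_length (tb : TieBreak V) (f1 f2 : Strat V) (h : Hist V) :
    (extend tb f1 f2 h).rounds.length = h.rounds.length + 1 := by
  unfold extend; split <;> simp

lemma extend_spec (tb : TieBreak V) (f1 f2 : Strat V) (h : Hist V) :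
    ((extend tb f1 f2 h).cur = (f1 h).2 ∧
      (extend tb f1 f2 h).pay1 = h.pay1 + (f1 h).1 ∧ (f2 h).1 ≤ (f1 h).1) ∨
    ((extend tb f1 f2 h).cur = (f2 h).2 ∧
      (extend tb f1 f2 h).pay1 = h.pay1 - (f2 h).1 ∧ (f1 h).1 ≤ (f2 h).1) := by
  unfold extend
  split
  case isTrue hc =>
    left
    refine ⟨by simp [Hist.cur], by simp [Hist.pay1], ?_⟩
    rcases hc with hc | hc
    · exact hc.le
    · exact hc.1.ge
  case isFalse hc =>
    right
    push_neg at hc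
    refine ⟨by simp [Hist.cur], by simp [Hist.pay1, sub_eq_add_neg], hc.1⟩

lemma play_length (tb : TieBreak V) (f1 f2 : Strat V) (v0 : V) :
    ∀ n, (play tb f1 f2 v0 n).rounds.length = n := by
  intro n
  induction n with
  | zero => rfl
  | succ n ih =>
    rw [show play tb f1 f2 v0 (n+1) = extend tb f1 f2 (play tb f1 f2 v0 n) from rfl,
      extend_length, ih]

lemma visit_zero (tb : TieBreak V) (f1 f2 : Strat V) (v0 : V) :
    visit tb f1 f2 v0 0 = v0 := rfl

lemma pay1_zero (tb : TieBreak V) (f1 f2 : Strat V) (v0 : V) :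
    (play tb f1 f2 v0 0).pay1 = 0 := rfl

/-- If Player 1 always bids legally (relative to budget `B`), his budget stays
nonnegative along any play. -/
lemma budget1_nonneg (tb : TieBreak V) (f1 f2 : Strat V) (v0 : V) {B : ℝ} (hB : 0 ≤ B)
    (hb : ∀ n, 0 ≤ (f1 (play tb f1 f2 v0 n)).1 ∧
      (f1 (play tb f1 f2 v0 n)).1 ≤ max 0 (B - (play tb f1 f2 v0 n).pay1)) :
    ∀ n, 0 ≤ B - (play tb f1 f2 v0 n).pay1 := by
  intro n
  induction n with
  | zero => rw [pay1_zero]; linarith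
  | succ n ih =>
    have hmax : max 0 (B - (play tb f1 f2 v0 n).pay1) = B - (play tb f1 f2 v0 n).pay1 :=
      max_eq_right ih
    rcases extend_spec tb f1 f2 (play tb f1 f2 v0 n) with ⟨_, hp, _⟩ | ⟨_, hp, hle⟩ <;>
      rw [show play tb f1 f2 v0 (n+1) = extend tb f1 f2 (play tb f1 f2 v0 n) from rfl, hp]
    · have := (hb n).2; rw [hmax] at this; linarith
    · have h1 := (hb n).1; linarith

/-- If Player 2 always bids legally (relative to budget `B`), his budget stays
nonnegative along any play. -/
lemma budget2_nonneg (tb : TieBreak V) (f1 f2 : Strat V) (v0 : V) {B : ℝ} (hB : 0 ≤ B)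
    (hb : ∀ n, 0 ≤ (f2 (play tb f1 f2 v0 n)).1 ∧
      (f2 (play tb f1 f2 v0 n)).1 ≤ max 0 (B - (play tb f1 f2 v0 n).pay2)) :
    ∀ n, 0 ≤ B - (play tb f1 f2 v0 n).pay2 := by
  have hpay2 : ∀ m, (play tb f1 f2 v0 m).pay2 = -(play tb f1 f2 v0 m).pay1 := fun m => rfl
  intro n
  induction n with
  | zero => rw [hpay2, pay1_zero]; linarith
  | succ n ih =>
    have hmax : max 0 (B - (play tb f1 f2 v0 n).pay2) = B - (play tb f1 f2 v0 n).pay2 :=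
      max_eq_right ih
    rw [hpay2] at ih
    rcases extend_spec tb f1 f2 (play tb f1 f2 v0 n) with ⟨_, hp, hle⟩ | ⟨_, hp, _⟩ <;>
      rw [hpay2, show play tb f1 f2 v0 (n+1) = extend tb f1 f2 (play tb f1 f2 v0 n) from rfl,
        hp]
    · have h1 := (hb n).1; linarith
    · have := (hb n).2; rw [hmax, hpay2] at this; linarith

end PlayLemmas

section RfunLemmas

variable {V : Type} [Fintype V]

lemma mem_adj (G : BiddingGame V) {v u : V} : u ∈ G.adj v ↔ G.E v u := by
  simp [BiddingGame.adj]

/-- `sup` of `Rfun` at level `i` over the successors of `v`. -/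
noncomputable def supR (G : BiddingGame V) (vR vS : V) (i : ℕ) (v : V) : ℝ :=
  (G.adj v).sup' (G.adj_nonempty v) (Rfun G vR vS i)

/-- `inf` of `Rfun` at level `i` over the successors of `v`. -/
noncomputable def infR (G : BiddingGame V) (vR vS : V) (i : ℕ) (v : V) : ℝ :=
  (G.adj v).inf' (G.adj_nonempty v) (Rfun G vR vS i)

/-- `sup` of `Rlim` over the successors of `v`. -/
noncomputable def supL (G : BiddingGame V) (vR vS : V) (v : V) : ℝ :=
  (G.adj v).sup' (G.adj_nonempty v) (Rlim G vR vS)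

/-- `inf` of `Rlim` over the successors of `v`. -/
noncomputable def infL (G : BiddingGame V) (vR vS : V) (v : V) : ℝ :=
  (G.adj v).inf' (G.adj_nonempty v) (Rlim G vR vS)

variable (G : BiddingGame V) (vR vS : V)

lemma Rfun_zero (v : V) : Rfun G vR vS 0 v = if v = vR then 0 else 1 := rfl

lemma Rfun_succ (i : ℕ) (v : V) :
    Rfun G vR vS (i+1) v =
      if v = vR then 0
      else if v = vS then 1
      else (supR G vR vS i v + infR G vR vS i v) / 2 := rfl

lemma infR_le_supR (i : ℕ) (v : V) : infR G vR vS i v ≤ supR G vR vS i v := by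
  obtain ⟨u, hu⟩ := G.adj_nonempty v
  exact le_trans (Finset.inf'_le _ hu) (Finset.le_sup' _ hu)

lemma Rfun_nonneg : ∀ (i : ℕ) (v : V), 0 ≤ Rfun G vR vS i v := by
  intro i
  induction i with
  | zero => intro v; rw [Rfun_zero]; split <;> norm_num
  | succ i ih =>
    intro v
    rw [Rfun_succ]
    split_ifs
    · norm_num
    · norm_num
    · have h1 : 0 ≤ infR G vR vS i v := Finset.le_inf' _ _ fun u _ => ih u
      have h2 := infR_le_supR G vR vS i v
      linarith

lemma Rfun_le_one : ∀ (i : ℕ) (v : V), Rfun G vR vS i v ≤ 1 := by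
  intro i
  induction i with
  | zero => intro v; rw [Rfun_zero]; split <;> norm_num
  | succ i ih =>
    intro v
    rw [Rfun_succ]
    split_ifs
    · norm_num
    · norm_num
    · have h1 : supR G vR vS i v ≤ 1 := Finset.sup'_le _ _ fun u _ => ih u
      have h2 := infR_le_supR G vR vS i v
      linarith

lemma Rfun_succ_le : ∀ (i : ℕ) (v : V), Rfun G vR vS (i+1) v ≤ Rfun G vR vS i v := by
  intro i
  induction i with
  | zero =>
    intro v
    rw [Rfun_zero]
    split_ifs with h
    · subst h; rw [Rfun_succ]; simp
    · exact Rfun_le_one G vR vS 1 v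
  | succ i ih =>
    intro v
    rw [Rfun_succ, Rfun_succ]
    split_ifs
    · norm_num
    · norm_num
    · have h1 : supR G vR vS (i+1) v ≤ supR G vR vS i v :=
        Finset.sup'_mono_fun fun u _ => ih u
      have h2 : infR G vR vS (i+1) v ≤ infR G vR vS i v := by
        obtain ⟨u, hu, hequ⟩ :=
          Finset.exists_mem_eq_inf' (G.adj_nonempty v) (Rfun G vR vS i)
        rw [show infR G vR vS i v = Rfun G vR vS i u from hequ]
        exact le_trans (Finset.inf'_le _ hu) (ih u)
      linarith

lemma Rfun_antitone (v : V) : Antitone fun i => Rfun G vR vS i v :=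
  antitone_nat_of_succ_le fun i => Rfun_succ_le G vR vS i v

lemma Rlim_le_Rfun (i : ℕ) (v : V) : Rlim G vR vS v ≤ Rfun G vR vS i v :=
  ciInf_le ⟨0, by rintro x ⟨j, rfl⟩; exact Rfun_nonneg G vR vS j v⟩ i

lemma Rlim_nonneg (v : V) : 0 ≤ Rlim G vR vS v :=
  le_ciInf fun i => Rfun_nonneg G vR vS i v

lemma Rlim_le_one (v : V) : Rlim G vR vS v ≤ 1 :=
  le_trans (Rlim_le_Rfun G vR vS 0 v) (Rfun_le_one G vR vS 0 v)

lemma Rfun_vR (i : ℕ) : Rfun G vR vS i vR = 0 := by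
  cases i with
  | zero => rw [Rfun_zero]; simp
  | succ i => rw [Rfun_succ]; simp

lemma Rfun_vS (h : vS ≠ vR) (i : ℕ) : Rfun G vR vS i vS = 1 := by
  cases i with
  | zero => rw [Rfun_zero]; simp [h]
  | succ i => rw [Rfun_succ]; simp [h]

lemma Rlim_vR : Rlim G vR vS vR = 0 := by
  have : ∀ i : ℕ, Rfun G vR vS i vR = 0 := Rfun_vR G vR vS
  unfold Rlim
  rw [funext this, ciInf_const]

lemma Rlim_vS (h : vS ≠ vR) : Rlim G vR vS vS = 1 := by
  have : ∀ i : ℕ, Rfun G vR vS i vS = 1 := Rfun_vS G vR vS h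
  unfold Rlim
  rw [funext this, ciInf_const]

lemma tendsto_Rfun (v : V) :
    Tendsto (fun i => Rfun G vR vS i v) atTop (nhds (Rlim G vR vS v)) :=
  tendsto_atTop_ciInf (Rfun_antitone G vR vS v)
    ⟨0, by rintro x ⟨j, rfl⟩; exact Rfun_nonneg G vR vS j v⟩

/-- Limits commute with `Finset.sup'`. -/
lemma tendsto_finset_sup' {α : Type*} {f : ℕ → α → ℝ} {g : α → ℝ} (s : Finset α) :
    ∀ hs : s.Nonempty,
    (∀ a ∈ s, Tendsto (fun i => f i a) atTop (nhds (g a))) →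
    Tendsto (fun i => s.sup' hs (f i)) atTop (nhds (s.sup' hs g)) := by
  induction s using Finset.cons_induction with
  | empty => intro hs; exact absurd hs (by simp)
  | cons a t ha ih =>
    intro hs hf
    rcases t.eq_empty_or_nonempty with rfl | ht
    · simpa using hf a (by simp)
    · simp only [Finset.sup'_cons (H := ht)]
      exact (hf a (Finset.mem_cons_self a t)).max
        (ih ht fun b hb => hf b (Finset.mem_cons_of_mem hb))

/-- Limits commute with `Finset.inf'`. -/
lemma tendsto_finset_inf' {α : Type*} {f : ℕ → α → ℝ} {g : α → ℝ} (s : Finset α) :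
    ∀ hs : s.Nonempty,
    (∀ a ∈ s, Tendsto (fun i => f i a) atTop (nhds (g a))) →
    Tendsto (fun i => s.inf' hs (f i)) atTop (nhds (s.inf' hs g)) := by
  induction s using Finset.cons_induction with
  | empty => intro hs; exact absurd hs (by simp)
  | cons a t ha ih =>
    intro hs hf
    rcases t.eq_empty_or_nonempty with rfl | ht
    · simpa using hf a (by simp)
    · simp only [Finset.inf'_cons (H := ht)]
      exact (hf a (Finset.mem_cons_self a t)).min
        (ih ht fun b hb => hf b (Finset.mem_cons_of_mem hb))

/-- The limit Richman function satisfies the fixpoint equation. -/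
lemma Rlim_fix {v : V} (hR : v ≠ vR) (hS : v ≠ vS) :
    Rlim G vR vS v = (supL G vR vS v + infL G vR vS v) / 2 := by
  have h1 : Tendsto (fun i => Rfun G vR vS (i+1) v) atTop (nhds (Rlim G vR vS v)) :=
    (tendsto_Rfun G vR vS v).comp (tendsto_add_atTop_nat 1)
  have h2 : Tendsto (fun i => Rfun G vR vS (i+1) v) atTop
      (nhds ((supL G vR vS v + infL G vR vS v) / 2)) := by
    simp only [Rfun_succ, if_neg hR, if_neg hS]
    have hsup : Tendsto (fun i => supR G vR vS i v) atTop (nhds (supL G vR vS v)) :=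
      tendsto_finset_sup' (G.adj v) (G.adj_nonempty v) fun u _ => tendsto_Rfun G vR vS u
    have hinf : Tendsto (fun i => infR G vR vS i v) atTop (nhds (infL G vR vS v)) :=
      tendsto_finset_inf' (G.adj v) (G.adj_nonempty v) fun u _ => tendsto_Rfun G vR vS u
    exact (hsup.add hinf).div_const 2
  exact tendsto_nhds_unique h1 h2

lemma infL_le_supL (v : V) : infL G vR vS v ≤ supL G vR vS v := by
  obtain ⟨u, hu⟩ := G.adj_nonempty v
  exact le_trans (Finset.inf'_le _ hu) (Finset.le_sup' _ hu)

lemma supL_le_one (v : V) : supL G vR vS v ≤ 1 :=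
  Finset.sup'_le _ _ fun u _ => Rlim_le_one G vR vS u

end RfunLemmas

section Strategies

variable {V : Type} [Fintype V]

/-- A fixed successor of `v` (used as a default move). -/
noncomputable def pick (G : BiddingGame V) (v : V) : V := (G.total v).choose

lemma pick_mem (G : BiddingGame V) (v : V) : G.E v (pick G v) := (G.total v).choose_spec

/-- A successor of `v` minimizing `Rfun` at level `j`. -/
noncomputable def mov1 (G : BiddingGame V) (vR vS : V) (j : ℕ) (v : V) : V :=
  (Finset.exists_mem_eq_inf' (G.adj_nonempty v) (Rfun G vR vS j)).choose

lemma mov1_mem (G : BiddingGame V) (vR vS : V) (j : ℕ) (v : V) :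
    mov1 G vR vS j v ∈ G.adj v :=
  (Finset.exists_mem_eq_inf' (G.adj_nonempty v) (Rfun G vR vS j)).choose_spec.1

lemma mov1_inf (G : BiddingGame V) (vR vS : V) (j : ℕ) (v : V) :
    infR G vR vS j v = Rfun G vR vS j (mov1 G vR vS j v) :=
  (Finset.exists_mem_eq_inf' (G.adj_nonempty v) (Rfun G vR vS j)).choose_spec.2

/-- A successor of `v` maximizing `Rlim`. -/
noncomputable def mov2 (G : BiddingGame V) (vR vS : V) (v : V) : V :=
  (Finset.exists_mem_eq_sup' (G.adj_nonempty v) (Rlim G vR vS)).choose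

lemma mov2_mem (G : BiddingGame V) (vR vS : V) (v : V) :
    mov2 G vR vS v ∈ G.adj v :=
  (Finset.exists_mem_eq_sup' (G.adj_nonempty v) (Rlim G vR vS)).choose_spec.1

lemma mov2_sup (G : BiddingGame V) (vR vS : V) (v : V) :
    supL G vR vS v = Rlim G vR vS (mov2 G vR vS v) :=
  (Finset.exists_mem_eq_sup' (G.adj_nonempty v) (Rlim G vR vS)).choose_spec.2

/-- Player 1's winning strategy, with budget `B` and horizon `N`. -/
noncomputable def stratOne (G : BiddingGame V) (vR vS : V) (B : ℝ) (N : ℕ) : Strat V :=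
  fun h =>
    if h.rounds.length < N ∧ h.cur ≠ vR ∧ h.cur ≠ vS then
      (max 0 (min ((supR G vR vS (N - 1 - h.rounds.length) h.cur -
                    infR G vR vS (N - 1 - h.rounds.length) h.cur) / 2) (B - h.pay1)),
       mov1 G vR vS (N - 1 - h.rounds.length) h.cur)
    else (0, pick G h.cur)

lemma stratOne_bid (G : BiddingGame V) (vR vS : V) (B : ℝ) (N : ℕ) (h : Hist V) :
    0 ≤ (stratOne G vR vS B N h).1 ∧
      (stratOne G vR vS B N h).1 ≤ max 0 (B - h.pay1) := by
  unfold stratOne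
  split
  · exact ⟨le_max_left _ _, max_le_max le_rfl (min_le_right _ _)⟩
  · exact ⟨le_rfl, le_max_left _ _⟩

lemma stratOne_legal (G : BiddingGame V) (vR vS : V) {B : ℝ} (hB : 0 ≤ B) (N : ℕ) :
    Legal1 G (stratOne G vR vS B N) B := by
  intro tb f2 v0 n
  have hbud := budget1_nonneg tb (stratOne G vR vS B N) f2 v0 hB
    (fun m => stratOne_bid G vR vS B N _) n
  refine ⟨(stratOne_bid G vR vS B N _).1, ?_, ?_⟩
  · have := (stratOne_bid G vR vS B N (play tb (stratOne G vR vS B N) f2 v0 n)).2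
    rwa [max_eq_right hbud] at this
  · unfold stratOne
    split
    · exact (mem_adj G).mp (mov1_mem G vR vS _ _)
    · exact pick_mem G _

/-- Player 2's winning strategy, with budget `B`. -/
noncomputable def stratTwo (G : BiddingGame V) (vR vS : V) (B : ℝ) : Strat V :=
  fun h =>
    if h.cur ≠ vR ∧ h.cur ≠ vS then
      (max 0 (min ((supL G vR vS h.cur - infL G vR vS h.cur) / 2) (B - h.pay2)),
       mov2 G vR vS h.cur)
    else (0, pick G h.cur)

lemma stratTwo_bid (G : BiddingGame V) (vR vS : V) (B : ℝ) (h : Hist V) :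
    0 ≤ (stratTwo G vR vS B h).1 ∧
      (stratTwo G vR vS B h).1 ≤ max 0 (B - h.pay2) := by
  unfold stratTwo
  split
  · exact ⟨le_max_left _ _, max_le_max le_rfl (min_le_right _ _)⟩
  · exact ⟨le_rfl, le_max_left _ _⟩

lemma stratTwo_legal (G : BiddingGame V) (vR vS : V) {B : ℝ} (hB : 0 ≤ B) :
    Legal2 G (stratTwo G vR vS B) B := by
  intro tb f1 v0 n
  have hbud := budget2_nonneg tb f1 (stratTwo G vR vS B) v0 hB
    (fun m => stratTwo_bid G vR vS B _) n
  refine ⟨(stratTwo_bid G vR vS B _).1, ?_, ?_⟩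
  · have := (stratTwo_bid G vR vS B (play tb f1 (stratTwo G vR vS B) v0 n)).2
    rwa [max_eq_right hbud] at this
  · unfold stratTwo
    split
    · exact (mem_adj G).mp (mov2_mem G vR vS _)
    · exact pick_mem G _

end Strategies


/-- The limit Richman function is a threshold budget function: if
Player 1's budget exceeds `R(v)` he has a winning strategy from `v`, and if Player 2's
budget exceeds `1 - R(v)` he has a winning strategy from `v` (for every tie-breaking
mechanism). -/
theorem richman_Rlim_is_threshold
    {V : Type} [Fintype V] (G : BiddingGame V) (vR vS : V) (hRS : vR ≠ vS) (v : V) :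
    (∀ B : ℝ, B ≤ 1 → Rlim G vR vS v < B → ∀ tb : TieBreak V,
      ∃ f1 : Strat V, Legal1 G f1 B ∧
        ∀ f2 : Strat V, Legal2 G f2 (1 - B) → Win1Richman tb f1 f2 v vR vS) ∧
    (∀ B : ℝ, B ≤ 1 → 1 - Rlim G vR vS v < B → ∀ tb : TieBreak V,
      ∃ f2 : Strat V, Legal2 G f2 B ∧
        ∀ f1 : Strat V, Legal1 G f1 (1 - B) → Win2Richman tb f1 f2 v vR vS) := by
  constructor
  · -- Player 1 has a winning strategy when his budget exceeds `Rlim v`.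
    intro B hB1 hB tb
    have hB0 : 0 ≤ B := le_trans (Rlim_nonneg G vR vS v) hB.le
    have hB' : ⨅ i, Rfun G vR vS i v < B := hB
    obtain ⟨N, hN⟩ : ∃ N, Rfun G vR vS N v < B := exists_lt_of_ciInf_lt hB'
    set f1 := stratOne G vR vS B N with hf1def
    refine ⟨f1, stratOne_legal G vR vS hB0 N, ?_⟩
    intro f2 hf2
    set pl := play tb f1 f2 v with hpl
    have hb2nn : ∀ n, 0 ≤ (1 - B) - (pl n).pay2 :=
      budget2_nonneg tb f1 f2 v (by linarith) fun n =>
        ⟨(hf2 tb f1 v n).1, le_trans (hf2 tb f1 v n).2.1 (le_max_right _ _)⟩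
    have hble1 : ∀ n, B - (pl n).pay1 ≤ 1 := by
      intro n
      have h := hb2nn n
      have h2 : (pl n).pay2 = -(pl n).pay1 := rfl
      rw [h2] at h; linarith
    have key : ∀ k, k ≤ N →
        (∃ m ≤ k, visit tb f1 f2 v m = vR ∧ ∀ m' < m, visit tb f1 f2 v m' ≠ vS) ∨
        (Rfun G vR vS (N - k) (visit tb f1 f2 v k) < B - (pl k).pay1 ∧
          ∀ m ≤ k, visit tb f1 f2 v m ≠ vR ∧ visit tb f1 f2 v m ≠ vS) := by
      intro k
      induction k with
      | zero =>
        intro _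
        by_cases hv : v = vR
        · exact Or.inl ⟨0, le_rfl, by rw [visit_zero]; exact hv,
            fun m' hm' => absurd hm' (Nat.not_lt_zero _)⟩
        · right
          have hvS : v ≠ vS := by
            intro hvs
            rw [hvs, Rfun_vS G vR vS (Ne.symm hRS) N] at hN
            linarith
          have hpay0 : (pl 0).pay1 = 0 := rfl
          refine ⟨by rw [Nat.sub_zero, visit_zero, hpay0]; simpa using hN, ?_⟩
          intro m hm
          have hm0 : m = 0 := Nat.le_zero.mp hm
          subst hm0
          exact ⟨by rw [visit_zero]; exact hv, by rw [visit_zero]; exact hvS⟩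
      | succ k ih =>
        intro hk1
        have hk : k < N := hk1
        rcases ih (Nat.le_of_succ_le hk1) with ⟨m, hm, h1, h2⟩ | ⟨hbud, hall⟩
        · exact Or.inl ⟨m, le_trans hm (Nat.le_succ k), h1, h2⟩
        · have hcur := hall k le_rfl
          have hlen : (pl k).rounds.length = k := play_length tb f1 f2 v k
          have hcurv : (pl k).cur = visit tb f1 f2 v k := rfl
          set j := N - 1 - k with hj
          have hNk : N - k = j + 1 := by omega
          set c := visit tb f1 f2 v k with hc
          have hcond : (pl k).rounds.length < N ∧ (pl k).cur ≠ vR ∧ (pl k).cur ≠ vS := by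
            rw [hlen, hcurv]; exact ⟨hk, hcur.1, hcur.2⟩
          have hbud' : Rfun G vR vS (j+1) c < B - (pl k).pay1 := by rw [← hNk]; exact hbud
          have hRc : Rfun G vR vS (j+1) c = (supR G vR vS j c + infR G vR vS j c) / 2 := by
            rw [Rfun_succ, if_neg hcur.1, if_neg hcur.2]
          have hinfnn : 0 ≤ infR G vR vS j c :=
            Finset.le_inf' _ _ fun u _ => Rfun_nonneg G vR vS j u
          have hbidle : (supR G vR vS j c - infR G vR vS j c) / 2 ≤ B - (pl k).pay1 := by
            rw [hRc] at hbud'; linarith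
          have hbidnn : 0 ≤ (supR G vR vS j c - infR G vR vS j c) / 2 := by
            have := infR_le_supR G vR vS j c; linarith
          have hf1v : f1 (pl k) =
              ((supR G vR vS j c - infR G vR vS j c) / 2, mov1 G vR vS j c) := by
            rw [hf1def]
            show (if (pl k).rounds.length < N ∧ (pl k).cur ≠ vR ∧ (pl k).cur ≠ vS then
              (max 0 (min ((supR G vR vS (N - 1 - (pl k).rounds.length) (pl k).cur -
                    infR G vR vS (N - 1 - (pl k).rounds.length) (pl k).cur) / 2)
                    (B - (pl k).pay1)),
               mov1 G vR vS (N - 1 - (pl k).rounds.length) (pl k).cur)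
              else (0, pick G (pl k).cur)) = _
            rw [if_pos hcond, hlen, hcurv, ← hj, min_eq_left hbidle,
              max_eq_right hbidnn]
          have hbid1 : (f1 (pl k)).1 = (supR G vR vS j c - infR G vR vS j c) / 2 :=
            congrArg Prod.fst hf1v
          have hmov1 : (f1 (pl k)).2 = mov1 G vR vS j c := congrArg Prod.snd hf1v
          have hnew : Rfun G vR vS j (visit tb f1 f2 v (k+1)) < B - (pl (k+1)).pay1 := by
            rcases extend_spec tb f1 f2 (pl k) with ⟨hcw, hpw, _⟩ | ⟨hcw, hpw, hle⟩
            · have hv' : visit tb f1 f2 v (k+1) = mov1 G vR vS j c := by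
                rw [show visit tb f1 f2 v (k+1) = (extend tb f1 f2 (pl k)).cur from rfl,
                  hcw, hmov1]
              have hpay : (pl (k+1)).pay1 = (pl k).pay1 + (f1 (pl k)).1 := hpw
              rw [hv', ← mov1_inf G vR vS j c, hpay, hbid1]
              rw [hRc] at hbud'
              linarith
            · have hv' : visit tb f1 f2 v (k+1) = (f2 (pl k)).2 := by
                rw [show visit tb f1 f2 v (k+1) = (extend tb f1 f2 (pl k)).cur from rfl, hcw]
              have hadj : visit tb f1 f2 v (k+1) ∈ G.adj c := by
                rw [hv', ← hcurv]
                exact (mem_adj G).mpr (hf2 tb f1 v k).2.2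
              have hRle : Rfun G vR vS j (visit tb f1 f2 v (k+1)) ≤ supR G vR vS j c :=
                Finset.le_sup' _ hadj
              have hbge : (supR G vR vS j c - infR G vR vS j c) / 2 ≤ (f2 (pl k)).1 := by
                rw [← hbid1]; exact hle
              have hpay : (pl (k+1)).pay1 = (pl k).pay1 - (f2 (pl k)).1 := hpw
              rw [hpay]
              rw [hRc] at hbud'
              linarith
          by_cases hvr : visit tb f1 f2 v (k+1) = vR
          · exact Or.inl ⟨k+1, le_rfl, hvr,
              fun m' hm' => (hall m' (Nat.lt_succ_iff.mp hm')).2⟩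
          · have hvs : visit tb f1 f2 v (k+1) ≠ vS := by
              intro hvs
              rw [hvs, Rfun_vS G vR vS (Ne.symm hRS) j] at hnew
              exact absurd (hble1 (k+1)) (not_le.mpr (by linarith))
            right
            have hNk1 : N - (k+1) = j := by
              rw [Nat.sub_succ, hNk]
              rfl
            refine ⟨by rw [hNk1]; exact hnew, ?_⟩
            intro m hm
            rcases Nat.eq_or_lt_of_le hm with h | h
            · rw [h]; exact ⟨hvr, hvs⟩
            · exact hall m (Nat.lt_succ_iff.mp h)
    rcases key N le_rfl with ⟨m, _, h1, h2⟩ | ⟨hbud, hall⟩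
    · exact ⟨m, h1, h2⟩
    · exfalso
      rw [Nat.sub_self, Rfun_zero, if_neg (hall N le_rfl).1] at hbud
      exact absurd (hble1 N) (not_le.mpr (by linarith))
  · -- Player 2 has a winning strategy when his budget exceeds `1 - Rlim v`.
    intro B hB1 hB tb
    have hB0 : 0 ≤ B := by
      have := Rlim_le_one G vR vS v; linarith
    set f2 := stratTwo G vR vS B with hf2def
    refine ⟨f2, stratTwo_legal G vR vS hB0, ?_⟩
    intro f1 hf1
    set pl := play tb f1 f2 v with hpl
    have hb1nn : ∀ n, 0 ≤ (1 - B) - (pl n).pay1 :=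
      budget1_nonneg tb f1 f2 v (by linarith) fun n =>
        ⟨(hf1 tb f2 v n).1, le_trans (hf1 tb f2 v n).2.1 (le_max_right _ _)⟩
    have hble1 : ∀ n, B - (pl n).pay2 ≤ 1 := by
      intro n
      have h := hb1nn n
      have h2 : (pl n).pay2 = -(pl n).pay1 := rfl
      rw [h2]; linarith
    have key : ∀ k,
        (∃ m ≤ k, visit tb f1 f2 v m = vS ∧ ∀ m' < m, visit tb f1 f2 v m' ≠ vR) ∨
        (1 - Rlim G vR vS (visit tb f1 f2 v k) < B - (pl k).pay2 ∧
          ∀ m ≤ k, visit tb f1 f2 v m ≠ vR ∧ visit tb f1 f2 v m ≠ vS) := by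
      intro k
      induction k with
      | zero =>
        by_cases hv : v = vS
        · exact Or.inl ⟨0, le_rfl, by rw [visit_zero]; exact hv,
            fun m' hm' => absurd hm' (Nat.not_lt_zero _)⟩
        · right
          have hvr : v ≠ vR := by
            intro h
            rw [h, Rlim_vR] at hB
            linarith
          have hpay0 : (pl 0).pay2 = 0 := by
            show -(pl 0).pay1 = 0
            rw [pay1_zero]; ring
          refine ⟨by rw [visit_zero, hpay0]; linarith, ?_⟩
          intro m hm
          have hm0 : m = 0 := Nat.le_zero.mp hm
          subst hm0
          exact ⟨by rw [visit_zero]; exact hvr, by rw [visit_zero]; exact hv⟩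
      | succ k ih =>
        rcases ih with ⟨m, hm, h1, h2⟩ | ⟨hbud, hall⟩
        · exact Or.inl ⟨m, le_trans hm (Nat.le_succ k), h1, h2⟩
        · have hcur := hall k le_rfl
          have hcurv : (pl k).cur = visit tb f1 f2 v k := rfl
          set c := visit tb f1 f2 v k with hc
          have hcond : (pl k).cur ≠ vR ∧ (pl k).cur ≠ vS := by
            rw [hcurv]; exact ⟨hcur.1, hcur.2⟩
          have hfix : Rlim G vR vS c = (supL G vR vS c + infL G vR vS c) / 2 :=
            Rlim_fix G vR vS hcur.1 hcur.2
          have hsup1 : supL G vR vS c ≤ 1 := supL_le_one G vR vS c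
          have hbidle : (supL G vR vS c - infL G vR vS c) / 2 ≤ B - (pl k).pay2 := by
            rw [hfix] at hbud; linarith
          have hbidnn : 0 ≤ (supL G vR vS c - infL G vR vS c) / 2 := by
            have := infL_le_supL G vR vS c; linarith
          have hf2v : f2 (pl k) =
              ((supL G vR vS c - infL G vR vS c) / 2, mov2 G vR vS c) := by
            rw [hf2def]
            show (if (pl k).cur ≠ vR ∧ (pl k).cur ≠ vS then
              (max 0 (min ((supL G vR vS (pl k).cur - infL G vR vS (pl k).cur) / 2)
                (B - (pl k).pay2)),
               mov2 G vR vS (pl k).cur)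
              else (0, pick G (pl k).cur)) = _
            rw [if_pos hcond, hcurv, min_eq_left hbidle, max_eq_right hbidnn]
          have hbid2 : (f2 (pl k)).1 = (supL G vR vS c - infL G vR vS c) / 2 :=
            congrArg Prod.fst hf2v
          have hmov2 : (f2 (pl k)).2 = mov2 G vR vS c := congrArg Prod.snd hf2v
          have hnew : 1 - Rlim G vR vS (visit tb f1 f2 v (k+1)) < B - (pl (k+1)).pay2 := by
            rcases extend_spec tb f1 f2 (pl k) with ⟨hcw, hpw, hle⟩ | ⟨hcw, hpw, hle⟩
            · -- Player 1 won the bidding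
              have hv' : visit tb f1 f2 v (k+1) = (f1 (pl k)).2 := by
                rw [show visit tb f1 f2 v (k+1) = (extend tb f1 f2 (pl k)).cur from rfl, hcw]
              have hadj : visit tb f1 f2 v (k+1) ∈ G.adj c := by
                rw [hv', ← hcurv]
                exact (mem_adj G).mpr (hf1 tb f2 v k).2.2
              have hRge : infL G vR vS c ≤ Rlim G vR vS (visit tb f1 f2 v (k+1)) :=
                Finset.inf'_le _ hadj
              have hbge : (supL G vR vS c - infL G vR vS c) / 2 ≤ (f1 (pl k)).1 := by
                rw [← hbid2]; exact hle
              have hpay : (pl (k+1)).pay2 = (pl k).pay2 - (f1 (pl k)).1 := by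
                show -(pl (k+1)).pay1 = -(pl k).pay1 - (f1 (pl k)).1
                rw [show (pl (k+1)).pay1 = (pl k).pay1 + (f1 (pl k)).1 from hpw]; ring
              rw [hpay]
              rw [hfix] at hbud
              linarith
            · -- Player 2 won the bidding
              have hv' : visit tb f1 f2 v (k+1) = mov2 G vR vS c := by
                rw [show visit tb f1 f2 v (k+1) = (extend tb f1 f2 (pl k)).cur from rfl,
                  hcw, hmov2]
              have hpay : (pl (k+1)).pay2 = (pl k).pay2 + (f2 (pl k)).1 := by
                show -(pl (k+1)).pay1 = -(pl k).pay1 + (f2 (pl k)).1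
                rw [show (pl (k+1)).pay1 = (pl k).pay1 - (f2 (pl k)).1 from hpw]; ring
              rw [hv', ← mov2_sup G vR vS c, hpay, hbid2]
              rw [hfix] at hbud
              linarith
          have hvr : visit tb f1 f2 v (k+1) ≠ vR := by
            intro h
            rw [h, Rlim_vR] at hnew
            exact absurd (hble1 (k+1)) (not_le.mpr (by linarith))
          by_cases hvs : visit tb f1 f2 v (k+1) = vS
          · exact Or.inl ⟨k+1, le_rfl, hvs,
              fun m' hm' => (hall m' (Nat.lt_succ_iff.mp hm')).1⟩
          · right
            refine ⟨hnew, ?_⟩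
            intro m hm
            rcases Nat.eq_or_lt_of_le hm with h | h
            · rw [h]; exact ⟨hvr, hvs⟩
            · exact hall m (Nat.lt_succ_iff.mp h)
    by_cases hex : ∃ k, ∃ m ≤ k, visit tb f1 f2 v m = vS ∧ ∀ m' < m, visit tb f1 f2 v m' ≠ vR
    · obtain ⟨k, m, _, h1, h2⟩ := hex
      exact Or.inl ⟨m, h1, h2⟩
    · right
      intro n
      rcases key n with h | ⟨_, hall⟩
      · exact absurd ⟨n, h⟩ hex
      · exact hall n le_rfl
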